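/- Let p be an odd prime and let L₁, ..., L_m be linear forms in d variables over 𝔽_p such that the quadratic forms LᵢᵀLᵢ are linearly independent over 𝔽_p. Let A = {x ∈ 𝔽_p^n : xᵀx = 0}. Then |ℙ_{x ∈ (𝔽_p^n)^d}[Lᵢ(x) ∈ A for all i] − p^{-m}| ≤ p^{-n/2}. -/

import Mathlib

open Finset

noncomputable def Complex.abs : AbsoluteValue ℂ ℝ :=
  IsAbsoluteValue.toAbsoluteValue (norm : ℂ → ℝ)

@[simp] lemma Complex.abs_apply' (z : ℂ) : Complex.abs z = ‖z‖ := rfl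

section Aux
variable {p : ℕ} [Fact p.Prime]

private lemma addchar_map_sum {ι : Type*} (ψ : AddChar (ZMod p) ℂ) (s : Finset ι)
    (f : ι → ZMod p) : ψ (∑ i ∈ s, f i) = ∏ i ∈ s, ψ (f i) := by
  induction s using Finset.cons_induction with
  | empty => simp
  | cons a s ha ih => rw [Finset.sum_cons, Finset.prod_cons, ψ.map_add_eq_mul, ih]

private lemma abs_stdAddChar (j : ZMod p) : Complex.abs (ZMod.stdAddChar j) = 1 := by
  rw [ZMod.stdAddChar_apply]; exact Circle.norm_coe _

private lemma abs_char_sum_le (b : ZMod p) :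
    Complex.abs (∑ y : ZMod p, ZMod.stdAddChar (b * (y * y))) ≤ p := by
  calc Complex.abs (∑ y : ZMod p, ZMod.stdAddChar (b * (y * y)))
      ≤ ∑ y : ZMod p, Complex.abs (ZMod.stdAddChar (b * (y * y))) :=
        Complex.abs.sum_le _ _
    _ = ∑ _y : ZMod p, (1 : ℝ) := by simp [abs_stdAddChar]
    _ = p := by simp [ZMod.card]

private lemma gauss_abs (hp : Odd p) {a : ZMod p} (ha : a ≠ 0) :
    Complex.abs (∑ y : ZMod p, ZMod.stdAddChar (a * (y * y))) = Real.sqrt p := by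
  have hp2 : p ≠ 2 := by rcases hp with ⟨k, hk⟩; omega
  have hF : ringChar (ZMod p) ≠ 2 := by rw [ZMod.ringChar_zmod_n]; exact_mod_cast hp2
  set ψ := ZMod.stdAddChar (N := p) with hψdef
  have hψ : ψ.IsPrimitive := ZMod.isPrimitive_stdAddChar p
  set χ : MulChar (ZMod p) ℂ := (quadraticChar (ZMod p)).ringHomComp (Int.castRingHom ℂ) with hχdef
  have hχ1 : χ ≠ 1 := by
    have hinj : Function.Injective ⇑(Int.castRingHom ℂ) := Int.cast_injective
    exact fun h => quadraticChar_ne_one hF ((MulChar.ringHomComp_eq_one_iff hinj).mp h)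
  have hχ2 : χ.IsQuadratic := (quadraticChar_isQuadratic (ZMod p)).comp _
  have habs : ∀ b : ZMod p, b ≠ 0 → Complex.abs (χ b) = 1 := by
    intro b hb
    rcases quadraticChar_dichotomy hb with h | h <;>
      simp [hχdef, MulChar.ringHomComp_apply, h]
  -- Step A : the sum equals the Gauss sum of χ with the shifted character
  have stepA : ∑ y : ZMod p, ψ (a * (y * y)) = gaussSum χ (ψ.mulShift a) := by
    have h1 : ∑ y : ZMod p, ψ (a * (y * y))
        = ∑ z : ZMod p, ∑ y ∈ univ.filter (fun y : ZMod p => y ^ 2 = z), ψ (a * z) := by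
      rw [Finset.sum_fiberwise' univ (fun y : ZMod p => y ^ 2) (fun z => ψ (a * z))]
      simp [pow_two]
    have h2 : ∀ z : ZMod p,
        ((univ.filter (fun y : ZMod p => y ^ 2 = z)).card : ℂ)
          = (quadraticChar (ZMod p) z : ℂ) + 1 := by
      intro z
      have := quadraticChar_card_sqrts hF z
      rw [Set.toFinset_setOf] at this
      exact_mod_cast congrArg (Int.cast : ℤ → ℂ) this
    rw [h1]
    simp only [Finset.sum_const, nsmul_eq_mul]
    rw [Finset.sum_congr rfl (fun z _ => by rw [h2 z])]
    have hsum0 : ∑ z : ZMod p, ψ (a * z) = 0 := by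
      have h := AddChar.sum_mulShift (ψ := ψ) a hψ
      rw [if_neg ha] at h
      calc ∑ z : ZMod p, ψ (a * z) = ∑ z : ZMod p, ψ (z * a) := by
            exact Finset.sum_congr rfl fun z _ => by rw [mul_comm]
        _ = 0 := by rw [h]; norm_num
    rw [gaussSum]
    simp only [add_mul, one_mul, Finset.sum_add_distrib, hsum0, add_zero,
      AddChar.mulShift_apply]
    rfl
  have hunit : IsUnit a := Ne.isUnit ha
  have hshift := gaussSum_mulShift χ ψ hunit.unit
  have habs2 : Complex.abs (gaussSum χ (ψ.mulShift a)) = Complex.abs (gaussSum χ ψ) := by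
    have := congrArg Complex.abs hshift
    rw [map_mul] at this
    rw [← this, habs _ (by simpa using ha), one_mul]
    rfl
  have hsq := gaussSum_sq hχ1 hχ2 hψ
  have habs3 : Complex.abs (gaussSum χ ψ) ^ 2 = p := by
    have := congrArg Complex.abs hsq
    rw [map_pow, map_mul] at this
    rw [this, habs _ (by simp), one_mul]
    simp [ZMod.card]
  rw [stepA, habs2, ← habs3, Real.sqrt_sq (AbsoluteValue.nonneg _ _)]

open QuadraticMap in
private lemma S_bound {d m : ℕ} (hp : Odd p) (c : Fin m → Fin d → ZMod p)
    (hsq : LinearIndependent (ZMod p)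
      (fun i : Fin m => fun rs : Fin d × Fin d => c i rs.1 * c i rs.2))
    {t : Fin m → ZMod p} (ht : t ≠ 0) :
    Complex.abs (∑ v : Fin d → ZMod p,
        ZMod.stdAddChar (∑ i, t i * (∑ u, c i u * v u) ^ 2))
      ≤ (p : ℝ) ^ d / Real.sqrt p := by
  have hp2 : p ≠ 2 := by rcases hp with ⟨k, hk⟩; omega
  have hF : ringChar (ZMod p) ≠ 2 := by rw [ZMod.ringChar_zmod_n]; exact_mod_cast hp2
  have h2 : (2 : ZMod p) ≠ 0 := Ring.two_ne_zero hF
  set ψ := ZMod.stdAddChar (N := p) with hψdef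
  -- the linear forms and the quadratic form
  set L : Fin m → ((Fin d → (ZMod p)) →ₗ[(ZMod p)] (ZMod p)) :=
    fun i => ∑ u, c i u • LinearMap.proj u with hLdef
  have hL : ∀ i v, L i v = ∑ u, c i u * v u := by
    intro i v
    simp [hLdef, LinearMap.sum_apply, LinearMap.smul_apply, LinearMap.proj_apply, smul_eq_mul]
  set Q : QuadraticMap (ZMod p) (Fin d → (ZMod p)) (ZMod p) :=
    ∑ i, t i • QuadraticMap.linMulLin (L i) (L i) with hQdef
  have hQ : ∀ v, Q v = ∑ i, t i * (∑ u, c i u * v u) ^ 2 := by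
    intro v
    rw [hQdef, QuadraticMap.sum_apply]
    exact Finset.sum_congr rfl fun i _ => by
      rw [QuadraticMap.smul_apply, QuadraticMap.linMulLin_apply, hL, smul_eq_mul, pow_two]
  -- Q is nonzero
  have hQ0 : Q ≠ 0 := by
    intro h
    have hv : ∀ v : Fin d → ZMod p, ∑ i, t i * (∑ u, c i u * v u) ^ 2 = 0 := by
      intro v; rw [← hQ v, h, QuadraticMap.zero_apply]
    have e : ∀ (i : Fin m) (r : Fin d), ∑ u, c i u * (Pi.single r (1 : ZMod p) : Fin d → ZMod p) u = c i r := by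
      intro i r
      simp [Pi.single_apply, mul_ite, Finset.sum_ite_eq']
    have key : ∀ r s : Fin d, ∑ i, t i * (c i r * c i s) = 0 := by
      intro r s
      have h1 := hv ((Pi.single r 1 : Fin d → ZMod p) + (Pi.single s 1 : Fin d → ZMod p))
      have h2' := hv (Pi.single r 1 : Fin d → ZMod p)
      have h3 := hv (Pi.single s 1 : Fin d → ZMod p)
      simp only [e] at h2' h3
      simp only [Pi.add_apply, mul_add, Finset.sum_add_distrib, e] at h1
      have expand : ∑ i, t i * (c i r + c i s) ^ 2
          = (∑ i, t i * c i r ^ 2) + (∑ i, t i * c i s ^ 2)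
            + 2 * ∑ i, t i * (c i r * c i s) := by
        rw [Finset.mul_sum, ← Finset.sum_add_distrib, ← Finset.sum_add_distrib]
        exact Finset.sum_congr rfl fun i _ => by ring
      rw [expand, h2', h3, zero_add, zero_add] at h1
      exact (mul_eq_zero.mp h1).resolve_left h2
    apply ht
    funext i
    refine Fintype.linearIndependent_iff.mp hsq t ?_ i
    funext rs
    have : (∑ i, t i • fun rs : Fin d × Fin d => c i rs.1 * c i rs.2) rs
        = ∑ i, t i * (c i rs.1 * c i rs.2) := by
      simp [Finset.sum_apply, Pi.smul_apply, smul_eq_mul]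
    rw [this, key rs.1 rs.2]; rfl
  -- diagonalize
  haveI : Invertible (2 : (ZMod p)) := invertibleOfNonzero h2
  obtain ⟨w, ⟨iso⟩⟩ := QuadraticForm.equivalent_weightedSumSquares Q
  have hNd : Module.finrank (ZMod p) (Fin d → (ZMod p)) = d := by rw [Module.finrank_pi, Fintype.card_fin]
  have hex : ∃ r : Fin (Module.finrank (ZMod p) (Fin d → ZMod p)), w r ≠ 0 := by
    by_contra hcon
    push_neg at hcon
    apply hQ0
    apply QuadraticMap.ext
    intro v
    rw [← iso.map_app v, QuadraticMap.zero_apply, weightedSumSquares_apply]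
    exact Finset.sum_eq_zero fun r _ => by rw [hcon r, zero_smul]
  -- transform the sum
  have hsum : ∑ v : Fin d → (ZMod p), ψ (∑ i, t i * (∑ u, c i u * v u) ^ 2)
      = ∏ r : Fin (Module.finrank (ZMod p) (Fin d → ZMod p)), ∑ y : (ZMod p), ψ (w r * (y * y)) := by
    calc ∑ v : Fin d → (ZMod p), ψ (∑ i, t i * (∑ u, c i u * v u) ^ 2)
        = ∑ v : Fin d → (ZMod p), ψ (weightedSumSquares (ZMod p) w (iso v)) := by
          exact Finset.sum_congr rfl fun v _ => by rw [iso.map_app v, hQ v]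
      _ = ∑ z : Fin (Module.finrank (ZMod p) (Fin d → ZMod p)) → (ZMod p), ψ (weightedSumSquares (ZMod p) w z) :=
          Equiv.sum_comp iso.toLinearEquiv.toEquiv (fun z => ψ (weightedSumSquares (ZMod p) w z))
      _ = ∑ z : Fin (Module.finrank (ZMod p) (Fin d → ZMod p)) → (ZMod p), ∏ r, ψ (w r * (z r * z r)) := by
          refine Finset.sum_congr rfl fun z _ => ?_
          rw [weightedSumSquares_apply, addchar_map_sum]
          exact Finset.prod_congr rfl fun r _ => by rw [smul_eq_mul]
      _ = ∏ r, ∑ y : (ZMod p), ψ (w r * (y * y)) :=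
          (Fintype.prod_sum (fun r y => ψ (w r * (y * y)))).symm
  rw [hsum, map_prod]
  obtain ⟨r₀, hr₀⟩ := hex
  have habs0 : Complex.abs (∑ y : (ZMod p), ψ (w r₀ * (y * y))) = Real.sqrt p :=
    gauss_abs hp hr₀
  have hbound : ∀ r, Complex.abs (∑ y : (ZMod p), ψ (w r * (y * y))) ≤ p := fun r =>
    abs_char_sum_le (w r)
  have hd : 1 ≤ d := by
    rw [← hNd]; exact Nat.one_le_iff_ne_zero.mpr fun hN => (hN ▸ r₀).elim0
  have hppos : (0 : ℝ) < p := by exact_mod_cast (Fact.out : p.Prime).pos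
  have hs0 : Real.sqrt p ≠ 0 := ne_of_gt (Real.sqrt_pos.mpr hppos)
  have step : ∏ r, Complex.abs (∑ y : (ZMod p), ψ (w r * (y * y)))
      ≤ Real.sqrt p * (p : ℝ) ^ (d - 1) := by
    rw [← Finset.mul_prod_erase univ _ (Finset.mem_univ r₀), habs0]
    have : ∏ r ∈ univ.erase r₀, Complex.abs (∑ y : (ZMod p), ψ (w r * (y * y)))
        ≤ (p : ℝ) ^ (d - 1) := by
      calc ∏ r ∈ univ.erase r₀, Complex.abs (∑ y : (ZMod p), ψ (w r * (y * y)))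
          ≤ ∏ _r ∈ univ.erase r₀, (p : ℝ) :=
            Finset.prod_le_prod (fun r _ => AbsoluteValue.nonneg _ _) (fun r _ => hbound r)
        _ = (p : ℝ) ^ (d - 1) := by
            rw [Finset.prod_const, Finset.card_erase_of_mem (Finset.mem_univ r₀),
              Finset.card_univ, Fintype.card_fin, hNd]
    exact mul_le_mul_of_nonneg_left this (Real.sqrt_nonneg _)
  refine step.trans (le_of_eq ?_)
  rw [eq_div_iff hs0, mul_comm (Real.sqrt p) _, mul_assoc, Real.mul_self_sqrt hppos.le,
    ← pow_succ, Nat.sub_add_cancel hd]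

set_option maxHeartbeats 1000000 in
private lemma count_identity (n d m : ℕ) (c : Fin m → Fin d → ZMod p) :
    ((Finset.univ.filter (fun x : Fin d → Fin n → ZMod p =>
        ∀ i : Fin m, ∑ j, (∑ u, c i u * x u j) ^ 2 = 0)).card : ℂ) * (p : ℂ) ^ m
      = ∑ t : Fin m → ZMod p,
          (∑ v : Fin d → ZMod p, ZMod.stdAddChar (∑ i, t i * (∑ u, c i u * v u) ^ 2)) ^ n := by
  set ψ := ZMod.stdAddChar (N := p) with hψdef
  have hψ : ψ.IsPrimitive := ZMod.isPrimitive_stdAddChar p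
  have hcard : (Fintype.card (ZMod p) : ℂ) = (p : ℂ) := by rw [ZMod.card]
  -- right-hand side, rewritten for each t as a sum over x
  have step1 : ∀ t : Fin m → ZMod p,
      (∑ v : Fin d → ZMod p, ψ (∑ i, t i * (∑ u, c i u * v u) ^ 2)) ^ n
        = ∑ x : Fin d → Fin n → ZMod p,
            ψ (∑ i, t i * ∑ j, (∑ u, c i u * x u j) ^ 2) := by
    intro t
    calc (∑ v : Fin d → ZMod p, ψ (∑ i, t i * (∑ u, c i u * v u) ^ 2)) ^ n
        = ∑ y : Fin n → Fin d → ZMod p,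
            ∏ j, ψ (∑ i, t i * (∑ u, c i u * y j u) ^ 2) :=
          Fintype.sum_pow (fun v : Fin d → ZMod p =>
            ψ (∑ i, t i * (∑ u, c i u * v u) ^ 2)) n
      _ = ∑ y : Fin n → Fin d → ZMod p,
            ψ (∑ j, ∑ i, t i * (∑ u, c i u * y j u) ^ 2) := by
          exact Finset.sum_congr rfl fun y _ => (addchar_map_sum ψ univ _).symm
      _ = ∑ x : Fin d → Fin n → ZMod p,
            ψ (∑ i, t i * ∑ j, (∑ u, c i u * x u j) ^ 2) := by
          rw [← Equiv.sum_comp (Equiv.piComm (fun (_ : Fin n) (_ : Fin d) => ZMod p))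
            (fun x : Fin d → Fin n → ZMod p =>
              ψ (∑ i, t i * ∑ j, (∑ u, c i u * x u j) ^ 2))]
          refine Finset.sum_congr rfl fun y _ => ?_
          congr 1
          simp only [Finset.mul_sum]
          rw [Finset.sum_comm]
          rfl
  rw [Finset.sum_congr rfl (fun t _ => step1 t), Finset.sum_comm]
  -- now evaluate the inner sum over t for each x
  have step2 : ∀ x : Fin d → Fin n → ZMod p,
      ∑ t : Fin m → ZMod p, ψ (∑ i, t i * ∑ j, (∑ u, c i u * x u j) ^ 2)
        = if (∀ i : Fin m, ∑ j, (∑ u, c i u * x u j) ^ 2 = 0) then (p : ℂ) ^ m else 0 := by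
    intro x
    calc ∑ t : Fin m → ZMod p, ψ (∑ i, t i * ∑ j, (∑ u, c i u * x u j) ^ 2)
        = ∑ t : Fin m → ZMod p, ∏ i, ψ (t i * ∑ j, (∑ u, c i u * x u j) ^ 2) :=
          Finset.sum_congr rfl fun t _ => addchar_map_sum ψ univ _
      _ = ∏ i, ∑ s : ZMod p, ψ (s * ∑ j, (∑ u, c i u * x u j) ^ 2) :=
          (Fintype.prod_sum fun i s => ψ (s * ∑ j, (∑ u, c i u * x u j) ^ 2)).symm
      _ = ∏ i, (if (∑ j, (∑ u, c i u * x u j) ^ 2 = 0) then ((p : ℂ)) else 0) := by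
          refine Finset.prod_congr rfl fun i _ => ?_
          have := AddChar.sum_mulShift (ψ := ψ) (∑ j, (∑ u, c i u * x u j) ^ 2) hψ
          rw [this]
          split_ifs <;> simp [ZMod.card]
      _ = if (∀ i : Fin m, ∑ j, (∑ u, c i u * x u j) ^ 2 = 0) then (p : ℂ) ^ m else 0 := by
          rw [Fintype.prod_ite_zero]
          split_ifs <;> simp
  rw [Finset.sum_congr rfl (fun x _ => step2 x), ← Finset.sum_filter,
    Finset.sum_const, nsmul_eq_mul]

end Aux


/-- For a square-independent system of linear forms `L₁,…,L_m` and the quadric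
`A = {x : xᵀx = 0}` in `𝔽_p^n`, the probability that every `Lᵢ(x) ∈ A` differs from
`p^{-m}` by at most `p^{-n/2}`. -/
theorem quadric_count_square_independent (p : ℕ) [Fact p.Prime] (hp : Odd p)
    (n d m : ℕ) (c : Fin m → Fin d → ZMod p)
    (hsq : LinearIndependent (ZMod p)
      (fun i : Fin m => fun rs : Fin d × Fin d => c i rs.1 * c i rs.2)) :
    |((Finset.univ.filter (fun x : Fin d → Fin n → ZMod p =>
          ∀ i : Fin m, ∑ j, (∑ u, c i u * x u j) ^ 2 = 0)).card : ℝ) /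
        (Fintype.card (Fin d → Fin n → ZMod p) : ℝ) - (p : ℝ) ^ (-(m : ℝ))| ≤
      (p : ℝ) ^ (-(n : ℝ) / 2) := by
  have hppos : (0 : ℝ) < p := by exact_mod_cast (Fact.out : p.Prime).pos
  have hspos : (0 : ℝ) < Real.sqrt p := Real.sqrt_pos.mpr hppos
  set X : ℕ := (Finset.univ.filter (fun x : Fin d → Fin n → ZMod p =>
          ∀ i : Fin m, ∑ j, (∑ u, c i u * x u j) ^ 2 = 0)).card with hX
  set S : (Fin m → ZMod p) → ℂ := fun t =>
    ∑ v : Fin d → ZMod p, ZMod.stdAddChar (∑ i, t i * (∑ u, c i u * v u) ^ 2) with hS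
  have hid : (X : ℂ) * (p : ℂ) ^ m = ∑ t : Fin m → ZMod p, S t ^ n := count_identity n d m c
  have hS0 : S 0 = (p : ℂ) ^ d := by
    rw [hS]
    simp only [Pi.zero_apply, zero_mul, Finset.sum_const_zero, AddChar.map_zero_eq_one]
    rw [Finset.sum_const, Finset.card_univ, Fintype.card_fun, ZMod.card, Fintype.card_fin,
      nsmul_eq_mul, mul_one]
    push_cast
    rfl
  have hsplit : ∑ t : Fin m → ZMod p, S t ^ n
      = (p : ℂ) ^ (d * n) + ∑ t ∈ univ.erase 0, S t ^ n := by
    rw [← Finset.add_sum_erase univ _ (Finset.mem_univ 0), hS0, ← pow_mul]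
  have key : Complex.abs ((X : ℂ) * (p : ℂ) ^ m - (p : ℂ) ^ (d * n))
      ≤ (p : ℝ) ^ m * ((p : ℝ) ^ d / Real.sqrt p) ^ n := by
    rw [hid, hsplit, add_sub_cancel_left]
    have hb : (0 : ℝ) ≤ (p : ℝ) ^ d / Real.sqrt p := by positivity
    calc Complex.abs (∑ t ∈ univ.erase 0, S t ^ n)
        ≤ ∑ t ∈ univ.erase 0, Complex.abs (S t ^ n) := Complex.abs.sum_le _ _
      _ ≤ ∑ _t ∈ univ.erase (0 : Fin m → ZMod p), ((p : ℝ) ^ d / Real.sqrt p) ^ n := by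
          refine Finset.sum_le_sum fun t ht => ?_
          rw [map_pow]
          exact pow_le_pow_left₀ (AbsoluteValue.nonneg _ _)
            (S_bound hp c hsq (Finset.mem_erase.mp ht).1) n
      _ ≤ (p : ℝ) ^ m * ((p : ℝ) ^ d / Real.sqrt p) ^ n := by
          rw [Finset.sum_const, nsmul_eq_mul]
          refine mul_le_mul_of_nonneg_right ?_ (pow_nonneg hb n)
          calc ((univ.erase (0 : Fin m → ZMod p)).card : ℝ)
              ≤ (univ : Finset (Fin m → ZMod p)).card :=
                Nat.cast_le.mpr (Finset.card_le_card (Finset.erase_subset _ _))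
            _ = (p : ℝ) ^ m := by
                rw [Finset.card_univ, Fintype.card_fun, ZMod.card, Fintype.card_fin]
                push_cast; rfl
  have hcast : ((X : ℂ) * (p : ℂ) ^ m - (p : ℂ) ^ (d * n))
      = (((X : ℝ) * (p : ℝ) ^ m - (p : ℝ) ^ (d * n) : ℝ) : ℂ) := by push_cast; ring
  rw [hcast, Complex.abs_apply', Complex.norm_real, Real.norm_eq_abs] at key
  have hC : (Fintype.card (Fin d → Fin n → ZMod p) : ℝ) = (p : ℝ) ^ (d * n) := by
    rw [Fintype.card_fun, Fintype.card_fun, ZMod.card, Fintype.card_fin, Fintype.card_fin,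
      ← pow_mul, Nat.mul_comm]
    push_cast; rfl
  have hrm : (p : ℝ) ^ (-(m : ℝ)) = ((p : ℝ) ^ m)⁻¹ := by
    rw [Real.rpow_neg hppos.le, Real.rpow_natCast]
  have hrn : (p : ℝ) ^ (-(n : ℝ) / 2) = (Real.sqrt (p : ℝ) ^ n)⁻¹ := by
    rw [neg_div, Real.rpow_neg hppos.le]
    congr 1
    rw [Real.sqrt_eq_rpow, ← Real.rpow_natCast ((p : ℝ) ^ ((1 : ℝ)/2)) n,
      ← Real.rpow_mul hppos.le]
    congr 1
    ring
  rw [hC, hrm, hrn]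
  have h1 : (X : ℝ) / (p : ℝ) ^ (d * n) - ((p : ℝ) ^ m)⁻¹
      = ((X : ℝ) * (p : ℝ) ^ m - (p : ℝ) ^ (d * n)) / ((p : ℝ) ^ (d * n) * (p : ℝ) ^ m) := by
    field_simp
  rw [h1, abs_div,
    abs_of_pos (show (0:ℝ) < (p : ℝ) ^ (d * n) * (p : ℝ) ^ m by positivity),
    div_le_iff₀ (by positivity)]
  refine key.trans (le_of_eq ?_)
  rw [div_pow, ← pow_mul]
  field_simp
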